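/- Let Y_1, ..., Y_k and X be finite random variables and let 1 ≤ r ≤ k. Then the sum over all r-element subsets S of {1,...,k} of H(Y_S | X) is at least binomial(k-1, r-1) · H(Y_{[k]} | X). -/
import Mathlib


open Finset

/-- Conditional Shannon entropy (base 2) of `f` given `g`, for a finite probability
space with mass function `p`. -/
noncomputable def condEnt {Ω α β : Type*} [Fintype Ω] [Fintype α] [Fintype β]
    [DecidableEq α] [DecidableEq β] (p : Ω → ℝ) (f : Ω → α) (g : Ω → β) : ℝ :=
  ∑ a : α, ∑ b : β,
    -((∑ ω : Ω, if f ω = a ∧ g ω = b then p ω else 0) *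
      Real.logb 2 ((∑ ω : Ω, if f ω = a ∧ g ω = b then p ω else 0) /
        (∑ ω : Ω, if g ω = b then p ω else 0)))

open Real

namespace HanAux

variable {Ω : Type*} [Fintype Ω]

/-- probability of the event `h = c` -/
noncomputable def pr (p : Ω → ℝ) {γ : Type*} [DecidableEq γ] (h : Ω → γ) (c : γ) : ℝ :=
  ∑ ω : Ω, if h ω = c then p ω else 0

/-- entropy of the push-forward distribution -/
noncomputable def ent (p : Ω → ℝ) {γ : Type*} [Fintype γ] [DecidableEq γ] (h : Ω → γ) : ℝ :=
  ∑ c : γ, -(pr p h c * Real.logb 2 (pr p h c))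

lemma pr_nonneg {p : Ω → ℝ} (hp0 : ∀ ω, 0 ≤ p ω) {γ : Type*} [DecidableEq γ]
    (h : Ω → γ) (c : γ) : 0 ≤ pr p h c := by
  apply Finset.sum_nonneg
  intro ω _
  split <;> simp [hp0 ω]


/-- The log-sum inequality. -/
lemma log_sum_ineq {ι : Type*} (t : Finset ι) (a b : ι → ℝ)
    (ha : ∀ i ∈ t, 0 ≤ a i) (hb : ∀ i ∈ t, 0 ≤ b i)
    (hab : ∀ i ∈ t, b i = 0 → a i = 0) :
    (∑ i ∈ t, a i) * Real.log ((∑ i ∈ t, a i) / (∑ i ∈ t, b i)) ≤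
      ∑ i ∈ t, a i * Real.log (a i / b i) := by
  classical
  set t' := t.filter (fun i => 0 < b i) with ht'
  have hzero : ∀ i ∈ t, i ∉ t' → a i = 0 := by
    intro i hi hni
    refine hab i hi ?_
    by_contra hbne
    exact hni (mem_filter.2 ⟨hi, lt_of_le_of_ne (hb i hi) (Ne.symm hbne)⟩)
  have hA : ∑ i ∈ t, a i = ∑ i ∈ t', a i := by
    refine (Finset.sum_subset (filter_subset _ _) ?_).symm
    intro i hi hni; exact hzero i hi hni
  have hB : ∑ i ∈ t, b i = ∑ i ∈ t', b i := by
    refine (Finset.sum_subset (filter_subset _ _) ?_).symm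
    intro i hi hni
    by_contra hbne
    exact hni (mem_filter.2 ⟨hi, lt_of_le_of_ne (hb i hi) (Ne.symm hbne)⟩)
  have hR : ∑ i ∈ t, a i * Real.log (a i / b i) =
      ∑ i ∈ t', a i * Real.log (a i / b i) := by
    refine (Finset.sum_subset (filter_subset _ _) ?_).symm
    intro i hi hni; rw [hzero i hi hni, zero_mul]
  rw [hA, hB, hR]
  set A := ∑ i ∈ t', a i with hAdef
  set B := ∑ i ∈ t', b i with hBdef
  have hbpos : ∀ i ∈ t', 0 < b i := fun i hi => (mem_filter.1 hi).2
  by_cases hBpos : 0 < B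
  · have hw0 : ∀ i ∈ t', 0 ≤ b i / B := fun i hi => div_nonneg (hbpos i hi).le hBpos.le
    have hw1 : ∑ i ∈ t', b i / B = 1 := by
      rw [← Finset.sum_div, div_self hBpos.ne']
    have hmem : ∀ i ∈ t', a i / b i ∈ Set.Ici (0:ℝ) := fun i hi =>
      div_nonneg (ha i (filter_subset _ _ hi)) (hbpos i hi).le
    have hJ := Real.convexOn_mul_log.map_sum_le (t := t') (w := fun i => b i / B)
      (p := fun i => a i / b i) hw0 hw1 hmem
    have hkey : ∀ i ∈ t', (b i / B) • (a i / b i) = a i / B := by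
      intro i hi
      rw [smul_eq_mul, div_mul_div_comm, mul_comm (b i) (a i),
        mul_div_mul_right _ _ (hbpos i hi).ne']
    rw [Finset.sum_congr rfl hkey, ← Finset.sum_div] at hJ
    have hkey2 : ∀ i ∈ t', (b i / B) • (a i / b i * Real.log (a i / b i)) =
        a i * Real.log (a i / b i) / B := by
      intro i hi
      rw [smul_eq_mul, ← mul_assoc, div_mul_div_comm, mul_comm (b i) (a i),
        mul_div_mul_right _ _ (hbpos i hi).ne', div_mul_eq_mul_div]
    rw [Finset.sum_congr rfl hkey2, ← Finset.sum_div] at hJ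
    have hBne : B ≠ 0 := hBpos.ne'
    have hstep := mul_le_mul_of_nonneg_right hJ hBpos.le
    rw [div_mul_cancel₀ _ hBne, mul_right_comm, div_mul_cancel₀ _ hBne] at hstep
    exact hstep
  · have hBzero : B = 0 := le_antisymm (not_lt.1 hBpos) (Finset.sum_nonneg fun i hi => (hbpos i hi).le)
    have ht'empty : t' = ∅ := by
      by_contra hne
      obtain ⟨i, hi⟩ := Finset.nonempty_iff_ne_empty.2 hne
      have := Finset.sum_pos' (fun j hj => (hbpos j hj).le) ⟨i, hi, hbpos i hi⟩
      rw [← hBdef] at this; exact absurd hBzero this.ne'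
    simp [ht'empty, hAdef, hBdef]

/-- logb 2 version -/
lemma logb_sum_ineq {ι : Type*} (t : Finset ι) (a b : ι → ℝ)
    (ha : ∀ i ∈ t, 0 ≤ a i) (hb : ∀ i ∈ t, 0 ≤ b i)
    (hab : ∀ i ∈ t, b i = 0 → a i = 0) :
    (∑ i ∈ t, a i) * Real.logb 2 ((∑ i ∈ t, a i) / (∑ i ∈ t, b i)) ≤
      ∑ i ∈ t, a i * Real.logb 2 (a i / b i) := by
  have h := log_sum_ineq t a b ha hb hab
  have h2 : (0:ℝ) < Real.log 2 := Real.log_pos (by norm_num)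
  have h3 := div_le_div_of_nonneg_right h h2.le
  simp only [Real.logb]
  rw [← mul_div_assoc]
  refine h3.trans_eq ?_
  rw [Finset.sum_div]
  exact Finset.sum_congr rfl fun i _ => (mul_div_assoc _ _ _)

lemma ent_comp_injective {p : Ω → ℝ} {γ γ' : Type*} [Fintype γ] [DecidableEq γ]
    [Fintype γ'] [DecidableEq γ'] (h : Ω → γ) (e : γ → γ') (he : Function.Injective e) :
    ent p (fun ω => e (h ω)) = ent p h := by
  classical
  unfold ent
  have h1 : ∀ c ∈ (Finset.univ : Finset γ'), c ∉ (Finset.univ : Finset γ).image e →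
      -(pr p (fun ω => e (h ω)) c * Real.logb 2 (pr p (fun ω => e (h ω)) c)) = 0 := by
    intro c _ hc
    have hz : pr p (fun ω => e (h ω)) c = 0 := by
      apply Finset.sum_eq_zero
      intro ω _
      rw [if_neg]
      intro heq
      exact hc (Finset.mem_image.2 ⟨h ω, Finset.mem_univ _, heq⟩)
    rw [hz]; simp
  rw [← Finset.sum_subset (Finset.subset_univ ((Finset.univ : Finset γ).image e)) h1,
    Finset.sum_image (fun x _ y _ hxy => he hxy)]
  apply Finset.sum_congr rfl
  intro b _
  have hpr : pr p (fun ω => e (h ω)) (e b) = pr p h b := by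
    apply Finset.sum_congr rfl
    intro ω _
    simp [he.eq_iff]
  rw [hpr]

lemma condEnt_eq {p : Ω → ℝ} (hp0 : ∀ ω, 0 ≤ p ω) {α β : Type*} [Fintype α] [Fintype β]
    [DecidableEq α] [DecidableEq β] (f : Ω → α) (g : Ω → β) :
    condEnt p f g = ent p (fun ω => (f ω, g ω)) - ent p g := by
  classical
  unfold condEnt
  have hpair : ∀ (a : α) (b : β), (∑ ω : Ω, if f ω = a ∧ g ω = b then p ω else 0)
      = pr p (fun ω => (f ω, g ω)) (a, b) := by
    intro a b; apply Finset.sum_congr rfl; intro ω _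
    simp [pr, Prod.ext_iff]
  have hQ : ∀ b : β, (∑ ω : Ω, if g ω = b then p ω else 0) = pr p g b := fun _ => rfl
  have hmarg : ∀ b : β, pr p g b = ∑ a : α, pr p (fun ω => (f ω, g ω)) (a, b) := by
    intro b
    unfold pr
    rw [Finset.sum_comm]
    apply Finset.sum_congr rfl
    intro ω _
    simp [Prod.ext_iff, ite_and, Finset.sum_ite_eq]
  simp_rw [hpair, hQ]
  have key : ∀ (a : α) (b : β),
      -((pr p (fun ω => (f ω, g ω)) (a, b)) *
        Real.logb 2 (pr p (fun ω => (f ω, g ω)) (a, b) / pr p g b))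
      = -(pr p (fun ω => (f ω, g ω)) (a, b) *
          Real.logb 2 (pr p (fun ω => (f ω, g ω)) (a, b)))
        + pr p (fun ω => (f ω, g ω)) (a, b) * Real.logb 2 (pr p g b) := by
    intro a b
    by_cases hP0 : pr p (fun ω => (f ω, g ω)) (a, b) = 0
    · simp [hP0]
    · have hPpos : 0 < pr p (fun ω => (f ω, g ω)) (a, b) :=
        lt_of_le_of_ne (pr_nonneg hp0 _ _) (Ne.symm hP0)
      have hQP : pr p (fun ω => (f ω, g ω)) (a, b) ≤ pr p g b := by
        rw [hmarg b]
        exact Finset.single_le_sum (f := fun a' => pr p (fun ω => (f ω, g ω)) (a', b)) (fun a' _ => pr_nonneg hp0 _ _) (Finset.mem_univ a)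
      have hQpos : 0 < pr p g b := lt_of_lt_of_le hPpos hQP
      rw [Real.logb_div hP0 hQpos.ne']
      ring
  simp_rw [key, Finset.sum_add_distrib]
  have hsecond : (∑ a : α, ∑ b : β,
      pr p (fun ω => (f ω, g ω)) (a, b) * Real.logb 2 (pr p g b)) = -(ent p g) := by
    rw [Finset.sum_comm]
    unfold ent
    rw [← Finset.sum_neg_distrib]
    apply Finset.sum_congr rfl
    intro b _
    rw [← Finset.sum_mul, ← hmarg b]
    ring
  have hfirst : (∑ a : α, ∑ b : β,
      -(pr p (fun ω => (f ω, g ω)) (a, b) * Real.logb 2 (pr p (fun ω => (f ω, g ω)) (a, b))))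
      = ent p (fun ω => (f ω, g ω)) := by
    unfold ent
    rw [Fintype.sum_prod_type]
  rw [hfirst, hsecond]
  ring

lemma condEnt_comp_le {p : Ω → ℝ} (hp0 : ∀ ω, 0 ≤ p ω) {α β β' : Type*}
    [Fintype α] [Fintype β] [Fintype β'] [DecidableEq α] [DecidableEq β] [DecidableEq β']
    (f : Ω → α) (g : Ω → β) (pp : β → β') :
    condEnt p f g ≤ condEnt p f (fun ω => pp (g ω)) := by
  classical
  unfold condEnt
  have hQ : ∀ (a : α) (c : β'), (∑ ω : Ω, if f ω = a ∧ pp (g ω) = c then p ω else 0)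
      = ∑ b ∈ Finset.univ.filter (fun b => pp b = c),
          (∑ ω : Ω, if f ω = a ∧ g ω = b then p ω else 0) := by
    intro a c
    rw [Finset.sum_comm]
    apply Finset.sum_congr rfl
    intro ω _
    simp [ite_and, Finset.sum_ite_eq, Finset.mem_filter]
  have hQg : ∀ (c : β'), (∑ ω : Ω, if pp (g ω) = c then p ω else 0)
      = ∑ b ∈ Finset.univ.filter (fun b => pp b = c),
          (∑ ω : Ω, if g ω = b then p ω else 0) := by
    intro c
    rw [Finset.sum_comm]
    apply Finset.sum_congr rfl
    intro ω _
    simp [Finset.sum_ite_eq, Finset.mem_filter]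
  apply Finset.sum_le_sum
  intro a _
  rw [← Finset.sum_fiberwise Finset.univ pp
    (fun b => -((∑ ω : Ω, if f ω = a ∧ g ω = b then p ω else 0) *
      Real.logb 2 ((∑ ω : Ω, if f ω = a ∧ g ω = b then p ω else 0) /
        (∑ ω : Ω, if g ω = b then p ω else 0))))]
  apply Finset.sum_le_sum
  intro c _
  rw [hQ a c, hQg c, Finset.sum_neg_distrib]
  apply neg_le_neg
  apply logb_sum_ineq
  · intro b _
    exact Finset.sum_nonneg fun ω _ => by split <;> simp [hp0 ω]
  · intro b _
    exact Finset.sum_nonneg fun ω _ => by split <;> simp [hp0 ω]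
  · intro b _ hb0
    have hle : (∑ ω : Ω, if f ω = a ∧ g ω = b then p ω else 0)
        ≤ (∑ ω : Ω, if g ω = b then p ω else 0) := by
      apply Finset.sum_le_sum
      intro ω _
      split_ifs with h1 h2 <;> first | rfl | exact hp0 ω | exact absurd h1.2 h2 | simp [hp0 ω]
    have hge : (0:ℝ) ≤ (∑ ω : Ω, if f ω = a ∧ g ω = b then p ω else 0) :=
      Finset.sum_nonneg fun ω _ => by split <;> simp [hp0 ω]
    linarith [hle.trans_eq hb0]

section Main

variable {k : ℕ} {G V : Type*} [Fintype G] [Fintype V] [DecidableEq G] [DecidableEq V]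

/-- Entropy of the tuple `(Y_T, X)`. -/
noncomputable def EE (p : Ω → ℝ) (Y : Fin k → Ω → G) (X : Ω → V) (T : Finset (Fin k)) : ℝ :=
  ent p (fun ω => ((fun i : {x // x ∈ T} => Y i ω), X ω))

lemma EE_insert (p : Ω → ℝ) (Y : Fin k → Ω → G) (X : Ω → V) (hp0 : ∀ ω, 0 ≤ p ω)
    {T : Finset (Fin k)} {i : Fin k} (hi : i ∉ T) :
    condEnt p (Y i) (fun ω => ((fun j : {x // x ∈ T} => Y j ω), X ω))
      = EE p Y X (insert i T) - EE p Y X T := by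
  rw [condEnt_eq hp0]
  congr 1
  let e : (({x // x ∈ insert i T} → G) × V) → G × (({x // x ∈ T} → G) × V) :=
    fun tv => (tv.1 ⟨i, Finset.mem_insert_self i T⟩,
      ((fun j => tv.1 ⟨j.1, Finset.mem_insert_of_mem j.2⟩), tv.2))
  have he : Function.Injective e := by
    rintro ⟨t1, v1⟩ ⟨t2, v2⟩ h
    simp only [e, Prod.mk.injEq] at h
    obtain ⟨h1, h2, h3⟩ := h
    refine Prod.ext ?_ h3
    funext x
    rcases Finset.mem_insert.1 x.2 with hx | hx
    · have hxi : x = ⟨i, Finset.mem_insert_self i T⟩ := Subtype.ext hx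
      rw [hxi]; exact h1
    · exact congrFun h2 ⟨x.1, hx⟩
  have hcomp := ent_comp_injective (p := p)
    (fun ω => ((fun j : {x // x ∈ insert i T} => Y j ω), X ω)) e he
  exact hcomp

lemma EE_diff_le (p : Ω → ℝ) (Y : Fin k → Ω → G) (X : Ω → V) (hp0 : ∀ ω, 0 ≤ p ω)
    {A B : Finset (Fin k)} (hAB : A ⊆ B) {i : Fin k} (hiB : i ∉ B) :
    EE p Y X (insert i B) - EE p Y X B ≤ EE p Y X (insert i A) - EE p Y X A := by
  have hiA : i ∉ A := fun h => hiB (hAB h)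
  rw [← EE_insert p Y X hp0 hiA, ← EE_insert p Y X hp0 hiB]
  exact condEnt_comp_le hp0 (Y i) (fun ω => ((fun j : {x // x ∈ B} => Y j ω), X ω))
    (fun tv => ((fun j : {x // x ∈ A} => tv.1 ⟨j.1, hAB j.2⟩), tv.2))

lemma EE_chain (p : Ω → ℝ) (Y : Fin k → Ω → G) (X : Ω → V) (S : Finset (Fin k)) :
    EE p Y X S - EE p Y X ∅ =
      ∑ n ∈ Finset.range k, (EE p Y X (S.filter (fun i => i.1 < n+1))
        - EE p Y X (S.filter (fun i => i.1 < n))) := by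
  rw [Finset.sum_range_sub (fun n => EE p Y X (S.filter (fun i => i.1 < n)))]
  congr 2
  · ext i; simp [i.isLt]
  · ext i; simp

lemma filter_succ_eq_insert {S : Finset (Fin k)} {i : Fin k} (hiS : i ∈ S) :
    S.filter (fun j => j.1 < i.1 + 1) = insert i (S.filter (fun j => j.1 < i.1)) := by
  ext j
  simp only [Finset.mem_filter, Finset.mem_insert, Nat.lt_succ_iff_lt_or_eq]
  constructor
  · rintro ⟨hjS, hj | hj⟩
    · exact Or.inr ⟨hjS, hj⟩
    · exact Or.inl (Fin.ext hj)
  · rintro (rfl | ⟨hjS, hj⟩)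
    · exact ⟨hiS, Or.inr rfl⟩
    · exact ⟨hjS, Or.inl hj⟩

lemma filter_succ_eq {S : Finset (Fin k)} {i : Fin k} (hiS : i ∉ S) :
    S.filter (fun j => j.1 < i.1 + 1) = S.filter (fun j => j.1 < i.1) := by
  ext j
  simp only [Finset.mem_filter, Nat.lt_succ_iff_lt_or_eq]
  constructor
  · rintro ⟨hjS, hj | hj⟩
    · exact ⟨hjS, hj⟩
    · cases Fin.ext hj; exact absurd hjS hiS
  · rintro ⟨hjS, hj⟩; exact ⟨hjS, Or.inl hj⟩

lemma EE_ge_sum (p : Ω → ℝ) (Y : Fin k → Ω → G) (X : Ω → V) (hp0 : ∀ ω, 0 ≤ p ω)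
    (S : Finset (Fin k)) :
    (∑ i ∈ S, (EE p Y X (Finset.univ.filter (fun j : Fin k => j.1 < i.1+1))
        - EE p Y X (Finset.univ.filter (fun j : Fin k => j.1 < i.1))))
      ≤ EE p Y X S - EE p Y X ∅ := by
  classical
  rw [EE_chain, ← Fin.sum_univ_eq_sum_range
    (fun n => EE p Y X (S.filter (fun i => i.1 < n+1)) - EE p Y X (S.filter (fun i => i.1 < n)))]
  rw [← Finset.sum_filter_add_sum_filter_not Finset.univ (fun i : Fin k => i ∈ S)]
  have hfilter : Finset.univ.filter (fun i : Fin k => i ∈ S) = S := by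
    ext i; simp
  have h2 : ∀ i ∈ Finset.univ.filter (fun i : Fin k => i ∉ S),
      (EE p Y X (S.filter (fun j => j.1 < i.1+1)) - EE p Y X (S.filter (fun j => j.1 < i.1))) = 0 := by
    intro i hi
    rw [filter_succ_eq (Finset.mem_filter.1 hi).2, sub_self]
  rw [Finset.sum_eq_zero h2, add_zero, hfilter]
  apply Finset.sum_le_sum
  intro i hiS
  rw [filter_succ_eq_insert hiS, filter_succ_eq_insert (Finset.mem_univ i)]
  apply EE_diff_le p Y X hp0
  · exact Finset.filter_subset_filter _ (Finset.subset_univ S)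
  · simp

lemma count_mem_powersetCard (i : Fin k) (r : ℕ) (hr : 1 ≤ r) :
    ((Finset.powersetCard r (Finset.univ : Finset (Fin k))).filter (fun S => i ∈ S)).card
      = (k-1).choose (r-1) := by
  classical
  have hcard : (Finset.univ.erase i).card = k - 1 := by
    rw [Finset.card_erase_of_mem (Finset.mem_univ i), Finset.card_univ, Fintype.card_fin]
  rw [← hcard, ← Finset.card_powersetCard]
  refine Finset.card_bij' (fun S _ => S.erase i) (fun T _ => insert i T) ?_ ?_ ?_ ?_
  · intro S hS
    rw [Finset.mem_filter, Finset.mem_powersetCard] at hS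
    rw [Finset.mem_powersetCard]
    exact ⟨Finset.erase_subset_erase i hS.1.1,
      by rw [Finset.card_erase_of_mem hS.2, hS.1.2]⟩
  · intro T hT
    rw [Finset.mem_powersetCard] at hT
    have hiT : i ∉ T := fun h => (Finset.mem_erase.1 (hT.1 h)).1 rfl
    rw [Finset.mem_filter, Finset.mem_powersetCard]
    refine ⟨⟨Finset.subset_univ _, ?_⟩, Finset.mem_insert_self i T⟩
    rw [Finset.card_insert_of_notMem hiT, hT.2]
    omega
  · intro S hS
    rw [Finset.mem_filter] at hS
    exact Finset.insert_erase hS.2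
  · intro T hT
    rw [Finset.mem_powersetCard] at hT
    have hiT : i ∉ T := fun h => (Finset.mem_erase.1 (hT.1 h)).1 rfl
    exact Finset.erase_insert hiT

theorem han_condEnt_ineq' (p : Ω → ℝ) (hp0 : ∀ ω, 0 ≤ p ω)
    (Y : Fin k → Ω → G) (X : Ω → V)
    (r : ℕ) (hr : 1 ≤ r) (hk : r ≤ k) :
    ((k - 1).choose (r - 1) : ℝ) * condEnt p (fun ω => fun i : Fin k => Y i ω) X ≤
      ∑ S ∈ Finset.powersetCard r (Finset.univ : Finset (Fin k)),
        condEnt p (fun ω => fun i : {x // x ∈ S} => Y i ω) X := by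
  classical
  set d : ℕ → ℝ := fun n => EE p Y X (Finset.univ.filter (fun j : Fin k => j.1 < n+1))
      - EE p Y X (Finset.univ.filter (fun j : Fin k => j.1 < n)) with hd
  have hE0 : EE p Y X (∅ : Finset (Fin k)) = ent p X := by
    have he : Function.Injective (fun v : V =>
        (((fun j : {x // x ∈ (∅ : Finset (Fin k))} => (Finset.notMem_empty j.1 j.2).elim), v) :
          ({x // x ∈ (∅ : Finset (Fin k))} → G) × V)) := by
      intro v1 v2 h
      exact congrArg Prod.snd h
    have hinj := ent_comp_injective (p := p) X _ he
    rw [← hinj]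
    unfold EE
    congr 1
    funext ω
    refine Prod.ext ?_ rfl
    funext j
    exact (Finset.notMem_empty j.1 j.2).elim
  have hSub : ∀ S : Finset (Fin k),
      condEnt p (fun ω => fun i : {x // x ∈ S} => Y i ω) X = EE p Y X S - EE p Y X ∅ := by
    intro S
    rw [condEnt_eq hp0, hE0]
    rfl
  have hFull : condEnt p (fun ω => fun i : Fin k => Y i ω) X
      = EE p Y X (Finset.univ : Finset (Fin k)) - EE p Y X ∅ := by
    rw [condEnt_eq hp0, hE0]
    congr 1
    have he : Function.Injective (fun tv : (Fin k → G) × V =>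
        (((fun j : {x // x ∈ (Finset.univ : Finset (Fin k))} => tv.1 j.1), tv.2) :
          ({x // x ∈ (Finset.univ : Finset (Fin k))} → G) × V)) := by
      rintro ⟨t1, v1⟩ ⟨t2, v2⟩ h
      simp only [Prod.mk.injEq] at h
      refine Prod.ext ?_ h.2
      funext x
      exact congrFun h.1 ⟨x, Finset.mem_univ x⟩
    exact (ent_comp_injective (p := p)
      (fun ω => ((fun i : Fin k => Y i ω), X ω)) _ he).symm
  have hsum : ∀ S ∈ Finset.powersetCard r (Finset.univ : Finset (Fin k)),
      (∑ i ∈ S, d i.1) ≤ condEnt p (fun ω => fun i : {x // x ∈ S} => Y i ω) X := by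
    intro S _
    rw [hSub S]
    exact EE_ge_sum p Y X hp0 S
  have h2 : (∑ S ∈ Finset.powersetCard r (Finset.univ : Finset (Fin k)), ∑ i ∈ S, d i.1)
      = ((k-1).choose (r-1) : ℝ) * ∑ i : Fin k, d i.1 := by
    have hstep : ∀ S ∈ Finset.powersetCard r (Finset.univ : Finset (Fin k)),
        (∑ i ∈ S, d i.1) = ∑ i : Fin k, if i ∈ S then d i.1 else 0 := by
      intro S _
      rw [← Finset.sum_filter]
      congr 1
      ext i; simp
    rw [Finset.sum_congr rfl hstep, Finset.sum_comm, Finset.mul_sum]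
    apply Finset.sum_congr rfl
    intro i _
    rw [← Finset.sum_filter, Finset.sum_const, count_mem_powersetCard i r hr]
    simp [nsmul_eq_mul]
  have h3 : (∑ i : Fin k, d i.1) = EE p Y X (Finset.univ : Finset (Fin k)) - EE p Y X ∅ := by
    rw [EE_chain p Y X Finset.univ,
      ← Fin.sum_univ_eq_sum_range (fun n =>
        EE p Y X (Finset.univ.filter (fun i : Fin k => i.1 < n+1))
          - EE p Y X (Finset.univ.filter (fun i : Fin k => i.1 < n)))]
  calc ((k - 1).choose (r - 1) : ℝ) * condEnt p (fun ω => fun i : Fin k => Y i ω) X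
      = ∑ S ∈ Finset.powersetCard r (Finset.univ : Finset (Fin k)), ∑ i ∈ S, d i.1 := by
        rw [h2, h3, hFull]
    _ ≤ _ := Finset.sum_le_sum hsum

end Main
end HanAux

/-- Conditional Han inequality: the sum over all `r`-element subsets `S` of `{1,…,k}`
of `H(Y_S | X)` is at least `C(k-1, r-1) · H(Y_{[k]} | X)`. -/
theorem han_condEnt_ineq {k : ℕ} {Ω G V : Type*} [Fintype Ω] [Fintype G] [Fintype V]
    [DecidableEq G] [DecidableEq V]
    (p : Ω → ℝ) (hp0 : ∀ ω, 0 ≤ p ω) (hp1 : ∑ ω : Ω, p ω = 1)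
    (Y : Fin k → Ω → G) (X : Ω → V)
    (r : ℕ) (hr : 1 ≤ r) (hk : r ≤ k) :
    ((k - 1).choose (r - 1) : ℝ) * condEnt p (fun ω => fun i : Fin k => Y i ω) X ≤
      ∑ S ∈ Finset.powersetCard r (Finset.univ : Finset (Fin k)),
        condEnt p (fun ω => fun i : {x // x ∈ S} => Y i ω) X :=
  HanAux.han_condEnt_ineq' p hp0 Y X r hr hk
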